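/- Fix n ≥ 1, binary vectors a, b ∈ F_2^n, and integers m, w with wt(a) = w. The number of vectors x ∈ F_4^n of Hamming weight m satisfying d(x, c) ≤ m (where c ∈ F_4^n has weight w, x and c viewed in F_4^n) equals G(m,w) = Σ_{t=0}^{m} C(w,t) 2^t Σ_{h=⌈(w-t)/2⌉}^{m-t} C(w-t, h) C(n-w, m-t-h) 3^{m-t-h}. -/
import Mathlib


open scoped Classical

/-- `G(m,w) = Σ_{t=0}^{m} C(w,t) 2^t Σ_{h=⌈(w-t)/2⌉}^{m-t} C(w-t,h) C(n-w,m-t-h) 3^{m-t-h}`. -/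
def G (n m w : ℕ) : ℕ :=
  ∑ t ∈ Finset.range (m+1), w.choose t * 2^t *
    ∑ h ∈ Finset.Icc ((w - t + 1)/2) (m - t),
      (w - t).choose h * (n - w).choose (m - t - h) * 3^(m - t - h)


open Finset

private lemma sum_eq_G (n m w : ℕ) :
    (∑ t ∈ range (w+1), w.choose t *
      ∑ h ∈ range (w - t + 1), (w - t).choose h *
        (if w ≤ t + 2*h ∧ t + h ≤ m then 2^t * ((n-w).choose (m - t - h) * 3^(m - t - h)) else 0))
    = G n m w := by
  set g : ℕ → ℕ → ℕ := fun t h =>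
    if w ≤ t + 2*h ∧ t + h ≤ m then
      w.choose t * ((w-t).choose h * (2^t * ((n-w).choose (m - t - h) * 3^(m - t - h)))) else 0
    with hg
  have hL : ∀ t, w.choose t *
      (∑ h ∈ range (w - t + 1), (w - t).choose h *
        (if w ≤ t + 2*h ∧ t + h ≤ m then 2^t * ((n-w).choose (m - t - h) * 3^(m - t - h)) else 0))
      = ∑ h ∈ range (m + w + 1), g t h := by
    intro t
    rw [mul_sum]
    rw [Finset.sum_subset (Finset.range_subset_range.2 (by omega : w - t + 1 ≤ m + w + 1))
      (by intro h _ hh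
          have : w - t < h := by simp at hh; omega
          simp [Nat.choose_eq_zero_of_lt this])]
    apply Finset.sum_congr rfl
    intro h _
    simp only [hg, mul_ite, mul_zero]
  have hLHS : (∑ t ∈ range (w+1), w.choose t *
      ∑ h ∈ range (w - t + 1), (w - t).choose h *
        (if w ≤ t + 2*h ∧ t + h ≤ m then 2^t * ((n-w).choose (m - t - h) * 3^(m - t - h)) else 0))
      = ∑ t ∈ range (m + w + 1), ∑ h ∈ range (m + w + 1), g t h := by
    rw [Finset.sum_subset (Finset.range_subset_range.2 (by omega : w + 1 ≤ m + w + 1))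
      (by intro t _ ht
          have htw : w < t := by simp at ht; omega
          simp [Nat.choose_eq_zero_of_lt htw])]
    exact Finset.sum_congr rfl fun t _ => hL t
  rw [hLHS, G]
  rw [← Finset.sum_subset (Finset.range_subset_range.2 (by omega : m + 1 ≤ m + w + 1))
    (by intro t _ ht
        have htm : m < t := by simp at ht; omega
        apply Finset.sum_eq_zero
        intro h _
        have hcond : ¬ (w ≤ t + 2*h ∧ t + h ≤ m) := by omega
        simp [hg, hcond])]
  apply Finset.sum_congr rfl
  intro t ht
  have htm : t ≤ m := by simp at ht; omega
  by_cases htw : t ≤ w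
  · have hiff : ∀ h, (w ≤ t + 2*h ∧ t + h ≤ m) ↔ h ∈ Icc ((w - t + 1)/2) (m - t) := by
      intro h; rw [Finset.mem_Icc]; omega
    have hterm : ∀ h ∈ range (m + w + 1), g t h
        = if h ∈ Icc ((w - t + 1)/2) (m - t) then
            w.choose t * 2^t * ((w - t).choose h * (n - w).choose (m - t - h) * 3^(m - t - h))
          else 0 := by
      intro h _
      rw [hg]
      simp only [hiff h]
      split_ifs with hc
      · ring
      · rfl
    rw [Finset.sum_congr rfl hterm, Finset.sum_ite_mem,
      Finset.inter_eq_right.2 ?_, Finset.mul_sum]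
    intro h hh
    simp only [Finset.mem_Icc] at hh
    simp only [Finset.mem_range]
    omega
  · push_neg at htw
    rw [Nat.choose_eq_zero_of_lt htw]
    simp only [zero_mul]
    apply Finset.sum_eq_zero
    intro h _
    simp [hg, Nat.choose_eq_zero_of_lt htw]

noncomputable local instance : Fintype (GaloisField 2 2) := Fintype.ofFinite _

private lemma F4card : Fintype.card (GaloisField 2 2) = 4 := by
  rw [← Nat.card_eq_fintype_card]
  exact GaloisField.card 2 (n := 2) (by norm_num)

private lemma cardne : (Finset.univ.filter (fun a : GaloisField 2 2 => a ≠ 0)).card = 3 := by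
  rw [Finset.filter_ne', Finset.card_erase_of_mem (mem_univ _), Finset.card_univ, F4card]

private lemma cardnene (b : GaloisField 2 2) (hb : b ≠ 0) :
    (Finset.univ.filter (fun a : GaloisField 2 2 => a ≠ 0 ∧ a ≠ b)).card = 2 := by
  have h1 : (Finset.univ.filter (fun a : GaloisField 2 2 => a ≠ 0 ∧ a ≠ b))
      = Finset.univ \ {0, b} := by
    ext a; simp [and_comm]
  rw [h1, Finset.card_sdiff_of_subset (by simp), Finset.card_pair (Ne.symm hb), Finset.card_univ, F4card]

private lemma fiber_card (n m : ℕ) (c : Fin n → GaloisField 2 2)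
    (T H O : Finset (Fin n)) (hT : ∀ i ∈ T, c i ≠ 0) (hH : ∀ i ∈ H, c i ≠ 0)
    (hO : ∀ i ∈ O, c i = 0) :
    ((Finset.univ.filter (fun x : Fin n → GaloisField 2 2 =>
        hammingNorm x = m ∧ hammingDist x c ≤ m)).filter
      (fun x => (Finset.univ.filter (fun i => c i ≠ 0 ∧ x i ≠ 0 ∧ x i ≠ c i),
                 Finset.univ.filter (fun i => c i ≠ 0 ∧ x i = c i),
                 Finset.univ.filter (fun i => c i = 0 ∧ x i ≠ 0)) = (T, H, O))).card
    = if Disjoint T H ∧ T.card + H.card + O.card = m ∧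
         (Finset.univ.filter (fun i => c i ≠ 0)).card ≤ T.card + 2*H.card
      then 2^T.card * 3^O.card else 0 := by
  set S : Finset (Fin n) := Finset.univ.filter (fun i => c i ≠ 0) with hSdef
  have hTS : T ⊆ S := fun i hi => by simp [hSdef, hT i hi]
  have hHS : H ⊆ S := fun i hi => by simp [hSdef, hH i hi]
  have hTO : ∀ i ∈ T, i ∉ O := fun i hi ho => hT i hi (hO i ho)
  have hHO : ∀ i ∈ H, i ∉ O := fun i hi ho => hH i hi (hO i ho)
  set tp : Fin n → Finset (GaloisField 2 2) := fun i =>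
    if i ∈ T then Finset.univ.filter (fun a => a ≠ 0 ∧ a ≠ c i)
    else if i ∈ H then {c i}
    else if i ∈ O then Finset.univ.filter (fun a => a ≠ 0)
    else {0} with htp
  -- pointwise properties of members of piFinset
  have piProps : ∀ x : Fin n → GaloisField 2 2, x ∈ Fintype.piFinset tp → Disjoint T H →
      (∀ i ∈ T, x i ≠ 0 ∧ x i ≠ c i) ∧ (∀ i ∈ H, x i = c i) ∧ (∀ i ∈ O, x i ≠ 0) ∧
      (∀ i, i ∉ T → i ∉ H → i ∉ O → x i = 0) := by
    intro x hx hd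
    rw [Fintype.mem_piFinset] at hx
    refine ⟨fun i hi => ?_, fun i hi => ?_, fun i hi => ?_, fun i h1 h2 h3 => ?_⟩
    · have := hx i; rw [htp] at this; simp only [if_pos hi] at this; simpa using this
    · have hiT : i ∉ T := Finset.disjoint_right.1 hd hi
      have := hx i; rw [htp] at this
      simp only [if_neg hiT, if_pos hi] at this; simpa using this
    · have hiT : i ∉ T := fun h => hTO i h hi
      have hiH : i ∉ H := fun h => hHO i h hi
      have := hx i; rw [htp] at this
      simp only [if_neg hiT, if_neg hiH, if_pos hi] at this; simpa using this
    · have := hx i; rw [htp] at this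
      simp only [if_neg h1, if_neg h2, if_neg h3] at this; simpa using this
  -- norm and dist of members of piFinset
  have hcards : ∀ x : Fin n → GaloisField 2 2, x ∈ Fintype.piFinset tp → Disjoint T H →
      hammingNorm x = T.card + H.card + O.card ∧
      hammingDist x c = T.card + (S.card - (T.card + H.card)) + O.card := by
    intro x hx hd
    obtain ⟨pT, pH, pO, p0⟩ := piProps x hx hd
    have hsupp : Finset.univ.filter (fun i => x i ≠ 0) = T ∪ H ∪ O := by
      ext i
      simp only [Finset.mem_filter, Finset.mem_univ, true_and, Finset.mem_union]
      constructor
      · intro hxi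
        by_contra hcon
        push_neg at hcon
        exact hxi (p0 i hcon.1.1 hcon.1.2 hcon.2)
      · rintro ((hi | hi) | hi)
        · exact (pT i hi).1
        · rw [pH i hi]; exact hH i hi
        · exact pO i hi
    have hdset : Finset.univ.filter (fun i => x i ≠ c i) = T ∪ S \ (T ∪ H) ∪ O := by
      ext i
      simp only [Finset.mem_filter, Finset.mem_univ, true_and, Finset.mem_union,
        Finset.mem_sdiff]
      constructor
      · intro hxi
        by_cases hci : c i = 0
        · refine Or.inr ?_
          have hiT : i ∉ T := fun h => hT i h hci
          have hiH : i ∉ H := fun h => hH i h hci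
          by_contra hiO
          exact hxi (by rw [p0 i hiT hiH hiO, hci])
        · have hiS : i ∈ S := by simp [hSdef, hci]
          have hiO : i ∉ O := fun h => hci (hO i h)
          by_cases hiT : i ∈ T
          · exact Or.inl (Or.inl hiT)
          · by_cases hiH : i ∈ H
            · exact absurd (pH i hiH) hxi
            · exact Or.inl (Or.inr ⟨hiS, fun h => h.elim hiT hiH⟩)
      · rintro ((hi | ⟨hiS, hi⟩) | hi)
        · exact (pT i hi).2
        · have hiT : i ∉ T := fun h => hi (Or.inl h)
          have hiH : i ∉ H := fun h => hi (Or.inr h)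
          have hiO : i ∉ O := fun h => by
            have := hO i h
            simp [hSdef, this] at hiS
          rw [p0 i hiT hiH hiO]
          intro h
          have : c i ≠ 0 := by simpa [hSdef] using hiS
          exact this h.symm
        · rw [hO i hi]
          exact pO i hi
    have hdTHO : Disjoint (T ∪ H) O :=
      Finset.disjoint_left.2 (fun i hi => by
        rcases Finset.mem_union.1 hi with h | h
        exacts [hTO i h, hHO i h])
    constructor
    · show (Finset.univ.filter (fun i => x i ≠ 0)).card = _
      rw [hsupp, Finset.card_union_of_disjoint hdTHO, Finset.card_union_of_disjoint hd]
    · show (Finset.univ.filter (fun i => x i ≠ c i)).card = _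
      rw [hdset]
      have hd2 : Disjoint (T ∪ S \ (T ∪ H)) O := by
        apply Finset.disjoint_left.2
        intro i hi ho
        rcases Finset.mem_union.1 hi with h | h
        · exact hTO i h ho
        · have := (Finset.mem_sdiff.1 h).1
          simp [hSdef, hO i ho] at this
      have hd1 : Disjoint T (S \ (T ∪ H)) := by
        apply Finset.disjoint_left.2
        intro i hi hmem
        exact (Finset.mem_sdiff.1 hmem).2 (Finset.mem_union_left H hi)
      rw [Finset.card_union_of_disjoint hd2, Finset.card_union_of_disjoint hd1,
        Finset.card_sdiff_of_subset (Finset.union_subset hTS hHS),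
        Finset.card_union_of_disjoint hd]
  have key : ∀ x : Fin n → GaloisField 2 2,
      ((hammingNorm x = m ∧ hammingDist x c ≤ m) ∧
        (Finset.univ.filter (fun i => c i ≠ 0 ∧ x i ≠ 0 ∧ x i ≠ c i),
         Finset.univ.filter (fun i => c i ≠ 0 ∧ x i = c i),
         Finset.univ.filter (fun i => c i = 0 ∧ x i ≠ 0)) = (T, H, O))
      ↔ (x ∈ Fintype.piFinset tp ∧ (Disjoint T H ∧ T.card + H.card + O.card = m ∧
          S.card ≤ T.card + 2*H.card)) := by
    intro x
    constructor
    · rintro ⟨⟨hnorm, hdist⟩, heq⟩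
      rw [Prod.mk.injEq, Prod.mk.injEq] at heq
      obtain ⟨hTx, hHx, hOx⟩ := heq
      have hd : Disjoint T H := by
        rw [← hTx, ← hHx]
        apply Finset.disjoint_left.2
        intro i hi1 hi2
        simp only [Finset.mem_filter, Finset.mem_univ, true_and] at hi1 hi2
        exact hi1.2.2 hi2.2
      have hpi : x ∈ Fintype.piFinset tp := by
        rw [Fintype.mem_piFinset]
        intro i
        simp only [htp]
        by_cases h1 : i ∈ T
        · rw [if_pos h1]
          rw [← hTx] at h1
          simp only [Finset.mem_filter, Finset.mem_univ, true_and] at h1 ⊢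
          exact h1.2
        · rw [if_neg h1]
          by_cases h2 : i ∈ H
          · rw [if_pos h2]
            rw [← hHx] at h2
            simp only [Finset.mem_filter, Finset.mem_univ, true_and,
              Finset.mem_singleton] at h2 ⊢
            exact h2.2
          · rw [if_neg h2]
            by_cases h3 : i ∈ O
            · rw [if_pos h3]
              rw [← hOx] at h3
              simp only [Finset.mem_filter, Finset.mem_univ, true_and] at h3 ⊢
              exact h3.2
            · rw [if_neg h3]
              simp only [Finset.mem_singleton]
              by_contra hxi
              by_cases hci : c i = 0
              · exact h3 (by rw [← hOx]; simp [hci, hxi])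
              · by_cases hxc : x i = c i
                · exact h2 (by rw [← hHx]; simp [hci, hxc])
                · exact h1 (by rw [← hTx]; simp [hci, hxi, hxc])
      obtain ⟨hn, hdv⟩ := hcards x hpi hd
      have hTHS : T.card + H.card ≤ S.card := by
        rw [← Finset.card_union_of_disjoint hd]
        exact Finset.card_le_card (Finset.union_subset hTS hHS)
      rw [hn] at hnorm
      rw [hdv] at hdist
      exact ⟨hpi, hd, hnorm, by omega⟩
    · rintro ⟨hpi, hd, hcardsum, hwcond⟩
      obtain ⟨pT, pH, pO, p0⟩ := piProps x hpi hd
      obtain ⟨hn, hdv⟩ := hcards x hpi hd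
      have hTHS : T.card + H.card ≤ S.card := by
        rw [← Finset.card_union_of_disjoint hd]
        exact Finset.card_le_card (Finset.union_subset hTS hHS)
      refine ⟨⟨by omega, by omega⟩, ?_⟩
      rw [Prod.mk.injEq, Prod.mk.injEq]
      refine ⟨?_, ?_, ?_⟩
      · ext i
        simp only [Finset.mem_filter, Finset.mem_univ, true_and]
        constructor
        · rintro ⟨hci, hx0, hxc⟩
          by_contra hiT
          have hiO : i ∉ O := fun h => hci (hO i h)
          by_cases hiH : i ∈ H
          · exact hxc (pH i hiH)
          · exact hx0 (p0 i hiT hiH hiO)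
        · intro hi
          exact ⟨hT i hi, (pT i hi).1, (pT i hi).2⟩
      · ext i
        simp only [Finset.mem_filter, Finset.mem_univ, true_and]
        constructor
        · rintro ⟨hci, hxc⟩
          by_contra hiH
          have hiO : i ∉ O := fun h => hci (hO i h)
          by_cases hiT : i ∈ T
          · exact (pT i hiT).2 hxc
          · rw [p0 i hiT hiH hiO] at hxc
            exact hci hxc.symm
        · intro hi; exact ⟨hH i hi, pH i hi⟩
      · ext i
        simp only [Finset.mem_filter, Finset.mem_univ, true_and]
        constructor
        · rintro ⟨hci, hx0⟩
          by_contra hiO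
          have hiT : i ∉ T := fun h => hT i h hci
          have hiH : i ∉ H := fun h => hH i h hci
          exact hx0 (p0 i hiT hiH hiO)
        · intro hi; exact ⟨hO i hi, pO i hi⟩
  by_cases hcond : Disjoint T H ∧ T.card + H.card + O.card = m ∧
      S.card ≤ T.card + 2*H.card
  · rw [if_pos hcond]
    have hset : ((Finset.univ.filter (fun x : Fin n → GaloisField 2 2 =>
        hammingNorm x = m ∧ hammingDist x c ≤ m)).filter
      (fun x => (Finset.univ.filter (fun i => c i ≠ 0 ∧ x i ≠ 0 ∧ x i ≠ c i),
                 Finset.univ.filter (fun i => c i ≠ 0 ∧ x i = c i),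
                 Finset.univ.filter (fun i => c i = 0 ∧ x i ≠ 0)) = (T, H, O)))
        = Fintype.piFinset tp := by
      ext x
      simp only [Finset.mem_filter, Finset.mem_univ, true_and]
      constructor
      · rintro ⟨h1, h2⟩
        exact ((key x).1 ⟨h1, h2⟩).1
      · intro hx
        obtain ⟨h1, h2⟩ := (key x).2 ⟨hx, hcond⟩
        exact ⟨h1, h2⟩
    rw [hset, Fintype.card_piFinset]
    have hprod : ∀ i : Fin n, (tp i).card
        = (if i ∈ T then 2 else 1) * (if i ∈ O then 3 else 1) := by
      intro i
      simp only [htp]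
      by_cases h1 : i ∈ T
      · rw [if_pos h1, if_pos h1, if_neg (hTO i h1), cardnene (c i) (hT i h1), mul_one]
      · rw [if_neg h1, if_neg h1]
        by_cases h2 : i ∈ H
        · rw [if_pos h2, if_neg (hHO i h2), Finset.card_singleton, one_mul]
        · rw [if_neg h2]
          by_cases h3 : i ∈ O
          · rw [if_pos h3, if_pos h3, cardne, one_mul]
          · rw [if_neg h3, if_neg h3, Finset.card_singleton, one_mul]
    rw [Finset.prod_congr rfl (fun i _ => hprod i), Finset.prod_mul_distrib]
    congr 1
    · rw [← Finset.prod_filter]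
      have : Finset.univ.filter (fun i => i ∈ T) = T := by ext i; simp
      rw [this, Finset.prod_const]
    · rw [← Finset.prod_filter]
      have : Finset.univ.filter (fun i => i ∈ O) = O := by ext i; simp
      rw [this, Finset.prod_const]
  · rw [if_neg hcond, Finset.card_eq_zero, Finset.eq_empty_iff_forall_notMem]
    intro x hx
    simp only [Finset.mem_filter, Finset.mem_univ, true_and] at hx
    exact hcond ((key x).1 ⟨hx.1, hx.2⟩).2

/-- For a fixed `c ∈ F₄ⁿ` of Hamming weight `w`, the number of `x ∈ F₄ⁿ` of Hamming weight `m`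
with `d(x,c) ≤ m` equals `G(m,w)`. -/
theorem count_close_vectors (n m w : ℕ) (hn : 1 ≤ n)
    (c : Fin n → GaloisField 2 2) (hc : hammingNorm c = w) :
    Nat.card {x : Fin n → GaloisField 2 2 //
        hammingNorm x = m ∧ hammingDist x c ≤ m}
      = G n m w := by
  classical
  set S : Finset (Fin n) := Finset.univ.filter (fun i => c i ≠ 0) with hSdef
  have hSw : S.card = w := hc
  have h0 : Nat.card {x : Fin n → GaloisField 2 2 //
        hammingNorm x = m ∧ hammingDist x c ≤ m}
      = (Finset.univ.filter (fun x : Fin n → GaloisField 2 2 =>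
          hammingNorm x = m ∧ hammingDist x c ≤ m)).card := by
    rw [Nat.card_eq_fintype_card, Fintype.card_subtype]
  rw [h0]
  have hmap : ∀ x ∈ Finset.univ.filter (fun x : Fin n → GaloisField 2 2 =>
      hammingNorm x = m ∧ hammingDist x c ≤ m),
      (Finset.univ.filter (fun i => c i ≠ 0 ∧ x i ≠ 0 ∧ x i ≠ c i),
       Finset.univ.filter (fun i => c i ≠ 0 ∧ x i = c i),
       Finset.univ.filter (fun i => c i = 0 ∧ x i ≠ 0))
      ∈ S.powerset ×ˢ S.powerset ×ˢ Sᶜ.powerset := by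
    intro x _
    simp only [Finset.mem_product, Finset.mem_powerset]
    refine ⟨?_, ?_, ?_⟩ <;>
      · intro i hi
        simp only [Finset.mem_filter, Finset.mem_univ, true_and] at hi
        simp [hSdef, hi.1]
  rw [Finset.card_eq_sum_card_fiberwise hmap, Finset.sum_product]
  have inner : ∀ T ∈ S.powerset, (∑ p ∈ S.powerset ×ˢ Sᶜ.powerset,
      ((Finset.univ.filter (fun x : Fin n → GaloisField 2 2 =>
          hammingNorm x = m ∧ hammingDist x c ≤ m)).filter
        (fun x => (Finset.univ.filter (fun i => c i ≠ 0 ∧ x i ≠ 0 ∧ x i ≠ c i),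
                   Finset.univ.filter (fun i => c i ≠ 0 ∧ x i = c i),
                   Finset.univ.filter (fun i => c i = 0 ∧ x i ≠ 0)) = (T, p.1, p.2))).card)
      = ∑ h ∈ range (w - T.card + 1), (w - T.card).choose h *
          (if w ≤ T.card + 2*h ∧ T.card + h ≤ m then
            2^T.card * ((n-w).choose (m - T.card - h) * 3^(m - T.card - h)) else 0) := by
    intro T hTmem
    have hTS : T ⊆ S := Finset.mem_powerset.1 hTmem
    have hT : ∀ i ∈ T, c i ≠ 0 := fun i hi => by
      have := hTS hi; simp only [hSdef, Finset.mem_filter] at this; exact this.2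
    rw [Finset.sum_product]
    -- rewrite each fiber card
    have hfib : ∀ H ∈ S.powerset, ∀ O ∈ Sᶜ.powerset,
        ((Finset.univ.filter (fun x : Fin n → GaloisField 2 2 =>
            hammingNorm x = m ∧ hammingDist x c ≤ m)).filter
          (fun x => (Finset.univ.filter (fun i => c i ≠ 0 ∧ x i ≠ 0 ∧ x i ≠ c i),
                     Finset.univ.filter (fun i => c i ≠ 0 ∧ x i = c i),
                     Finset.univ.filter (fun i => c i = 0 ∧ x i ≠ 0)) = (T, H, O))).card
        = if Disjoint T H ∧ T.card + H.card + O.card = m ∧ w ≤ T.card + 2*H.card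
          then 2^T.card * 3^O.card else 0 := by
      intro H hHmem O hOmem
      have hH : ∀ i ∈ H, c i ≠ 0 := fun i hi => by
        have := Finset.mem_powerset.1 hHmem hi
        simp only [hSdef, Finset.mem_filter] at this; exact this.2
      have hO : ∀ i ∈ O, c i = 0 := fun i hi => by
        have := Finset.mem_powerset.1 hOmem hi
        simp only [hSdef, Finset.mem_compl, Finset.mem_filter, Finset.mem_univ,
          true_and, not_not] at this
        exact this
      rw [fiber_card n m c T H O hT hH hO, ← hSdef, hSw]
    rw [Finset.sum_congr rfl (fun H hH => Finset.sum_congr rfl (fun O hO => hfib H hH O hO))]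
    -- O-sum
    have hOcard : (Sᶜ : Finset (Fin n)).card = n - w := by
      rw [Finset.card_compl, hSw, Fintype.card_fin]
    have stepO : ∀ H ∈ S.powerset,
        (∑ O ∈ (Sᶜ : Finset (Fin n)).powerset,
          if Disjoint T H ∧ T.card + H.card + O.card = m ∧ w ≤ T.card + 2*H.card
          then 2^T.card * 3^O.card else 0)
        = if Disjoint T H ∧ w ≤ T.card + 2*H.card ∧ T.card + H.card ≤ m
          then 2^T.card * ((n-w).choose (m - T.card - H.card) * 3^(m - T.card - H.card))
          else 0 := by
      intro H _
      by_cases hc1 : Disjoint T H ∧ w ≤ T.card + 2*H.card ∧ T.card + H.card ≤ m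
      · rw [if_pos hc1]
        obtain ⟨hd, hw2, hm2⟩ := hc1
        have hterm : ∀ O ∈ (Sᶜ : Finset (Fin n)).powerset,
            (if Disjoint T H ∧ T.card + H.card + O.card = m ∧ w ≤ T.card + 2*H.card
             then 2^T.card * 3^O.card else 0)
            = if O.card = m - T.card - H.card
              then 2^T.card * ((3:ℕ)^(m - T.card - H.card)) else 0 := by
          intro O _
          by_cases hOc : O.card = m - T.card - H.card
          · rw [if_pos hOc, if_pos ⟨hd, by omega, hw2⟩, hOc]
          · rw [if_neg hOc, if_neg (fun h => hOc (by omega))]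
        rw [Finset.sum_congr rfl hterm, ← Finset.sum_filter]
        rw [show ((Sᶜ : Finset (Fin n)).powerset.filter
              (fun O => O.card = m - T.card - H.card))
            = Finset.powersetCard (m - T.card - H.card) (Sᶜ : Finset (Fin n)) by
          rw [Finset.powersetCard_eq_filter]]
        rw [Finset.sum_const, Finset.card_powersetCard, hOcard, smul_eq_mul]
        ring
      · rw [if_neg hc1]
        apply Finset.sum_eq_zero
        intro O _
        rw [if_neg]
        intro h
        exact hc1 ⟨h.1, h.2.2, by omega⟩
    rw [Finset.sum_congr rfl stepO]
    -- H-sum : restrict to (S \ T).powerset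
    rw [← Finset.sum_subset (Finset.powerset_mono.2 (Finset.sdiff_subset : S \ T ⊆ S))
      (by intro H hH1 hH2
          rw [if_neg]
          intro hcontra
          apply hH2
          rw [Finset.mem_powerset, Finset.subset_sdiff]
          exact ⟨Finset.mem_powerset.1 hH1, hcontra.1.symm⟩)]
    have hdisj : ∀ H ∈ (S \ T).powerset,
        (if Disjoint T H ∧ w ≤ T.card + 2*H.card ∧ T.card + H.card ≤ m
         then 2^T.card * ((n-w).choose (m - T.card - H.card) * 3^(m - T.card - H.card))
         else 0)
        = if w ≤ T.card + 2*H.card ∧ T.card + H.card ≤ m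
          then 2^T.card * ((n-w).choose (m - T.card - H.card) * 3^(m - T.card - H.card))
          else 0 := by
      intro H hHm
      have hd : Disjoint T H :=
        ((Finset.subset_sdiff.1 (Finset.mem_powerset.1 hHm)).2).symm
      by_cases hq : w ≤ T.card + 2*H.card ∧ T.card + H.card ≤ m
      · rw [if_pos ⟨hd, hq⟩, if_pos hq]
      · rw [if_neg (fun h => hq h.2), if_neg hq]
    rw [Finset.sum_congr rfl hdisj]
    -- group by card
    rw [Finset.sum_powerset]
    rw [Finset.card_sdiff_of_subset hTS, hSw]
    apply Finset.sum_congr rfl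
    intro h _
    have : ∀ H ∈ Finset.powersetCard h (S \ T),
        (if w ≤ T.card + 2*H.card ∧ T.card + H.card ≤ m
         then 2^T.card * ((n-w).choose (m - T.card - H.card) * 3^(m - T.card - H.card))
         else 0)
        = if w ≤ T.card + 2*h ∧ T.card + h ≤ m
          then 2^T.card * ((n-w).choose (m - T.card - h) * 3^(m - T.card - h))
          else 0 := by
      intro H hHm
      rw [(Finset.mem_powersetCard.1 hHm).2]
    rw [Finset.sum_congr rfl this, Finset.sum_const, Finset.card_powersetCard,
      Finset.card_sdiff_of_subset hTS, hSw, smul_eq_mul]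
  rw [Finset.sum_congr rfl inner]
  -- group T by card
  rw [Finset.sum_powerset, hSw]
  rw [← sum_eq_G n m w]
  apply Finset.sum_congr rfl
  intro t _
  have : ∀ T ∈ Finset.powersetCard t S,
      (∑ h ∈ range (w - T.card + 1), (w - T.card).choose h *
        (if w ≤ T.card + 2*h ∧ T.card + h ≤ m then
          2^T.card * ((n-w).choose (m - T.card - h) * 3^(m - T.card - h)) else 0))
      = ∑ h ∈ range (w - t + 1), (w - t).choose h *
          (if w ≤ t + 2*h ∧ t + h ≤ m then
            2^t * ((n-w).choose (m - t - h) * 3^(m - t - h)) else 0) := by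
    intro T hTm
    rw [(Finset.mem_powersetCard.1 hTm).2]
  rw [Finset.sum_congr rfl this, Finset.sum_const, Finset.card_powersetCard, hSw,
    smul_eq_mul]
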